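/- For every squarefree positive integer r, one has -r ∑_{d|r} (μ(d)/d) log d = φ(r) ∑_{p|r} (log p)/(p-1), where the last sum ranges over prime divisors p of r. -/

import Mathlib

open ArithmeticFunction Real

lemma sum_moebius_div_eq (m : ℕ) (hm : 0 < m) (hsq : Squarefree m) :
    ∑ e ∈ m.divisors, (moebius e : ℝ) / e = (m.totient : ℝ) / m := by
  have h := ArithmeticFunction.IsMultiplicative.prodPrimeFactors_one_sub_of_squarefree
    (ArithmeticFunction.pdiv (ArithmeticFunction.zeta : ArithmeticFunction ℝ) ArithmeticFunction.id)
    (isMultiplicative_zeta.natCast.pdiv isMultiplicative_id.natCast) hsq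
  have hR : ∑ d ∈ m.divisors, (moebius d : ℝ) *
      ((ArithmeticFunction.pdiv (ArithmeticFunction.zeta : ArithmeticFunction ℝ) ArithmeticFunction.id) d)
      = ∑ e ∈ m.divisors, (moebius e : ℝ) / e := by
    refine Finset.sum_congr rfl fun d hd => ?_
    have hd0 : d ≠ 0 := (Nat.pos_of_mem_divisors hd).ne'
    simp [pdiv_apply, zeta_apply, hd0, div_eq_mul_inv]
  have hQR : (m.totient : ℝ) = m * ∏ p ∈ m.primeFactors, (1 - (p:ℝ)⁻¹) := by
    have h2 := congrArg (fun q : ℚ => (q : ℝ)) (Nat.totient_eq_mul_prod_factors m)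
    push_cast at h2
    exact h2
  have hP : ∏ p ∈ m.primeFactors,
      (1 - (ArithmeticFunction.pdiv (ArithmeticFunction.zeta : ArithmeticFunction ℝ) ArithmeticFunction.id) p)
      = (m.totient : ℝ) / m := by
    have hm0 : (m : ℝ) ≠ 0 := Nat.cast_ne_zero.mpr hm.ne'
    rw [hQR, mul_comm, mul_div_assoc, div_self hm0, mul_one]
    refine Finset.prod_congr rfl fun p hp => ?_
    have hp0 : p ≠ 0 := (Nat.prime_of_mem_primeFactors hp).pos.ne'
    simp [pdiv_apply, zeta_apply, hp0, one_div]
  rw [← hR, ← h]; exact hP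

theorem stmt_0 (r : ℕ) (hr : 0 < r) (hsq : Squarefree r) :
    -(r : ℝ) * ∑ d ∈ r.divisors, ((moebius d : ℝ) / d) * Real.log d =
      (Nat.totient r : ℝ) * ∑ p ∈ r.primeFactors, Real.log p / ((p : ℝ) - 1) := by
  have hr0 : (r : ℝ) ≠ 0 := Nat.cast_ne_zero.mpr hr.ne'
  -- Step 1: expand the logarithm
  have h1 : ∑ d ∈ r.divisors, ((moebius d : ℝ) / d) * Real.log d
      = ∑ d ∈ r.divisors, ∑ p ∈ d.primeFactors, ((moebius d : ℝ) / d) * Real.log p := by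
    refine Finset.sum_congr rfl fun d hd => ?_
    rw [← Finset.mul_sum]
    congr 1
    have hdsq := hsq.squarefree_of_dvd (Nat.dvd_of_mem_divisors hd)
    conv_lhs => rw [← Nat.prod_primeFactors_of_squarefree hdsq]
    rw [Nat.cast_prod, Real.log_prod]
    intro p hp
    exact Nat.cast_ne_zero.mpr (Nat.prime_of_mem_primeFactors hp).pos.ne'
  -- Step 2: swap order of summation
  have h2 : ∑ d ∈ r.divisors, ∑ p ∈ d.primeFactors, ((moebius d : ℝ) / d) * Real.log p
      = ∑ p ∈ r.primeFactors, ∑ d ∈ r.divisors.filter (p ∣ ·),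
          ((moebius d : ℝ) / d) * Real.log p := by
    refine Finset.sum_comm' fun d p => ?_
    simp only [Nat.mem_divisors, Nat.mem_primeFactors, Finset.mem_filter]
    constructor
    · rintro ⟨⟨hdr, hr0'⟩, hp, hpd, hd0⟩
      exact ⟨⟨⟨hdr, hr0'⟩, hpd⟩, hp, hpd.trans hdr, hr0'⟩
    · rintro ⟨⟨⟨hdr, hr0'⟩, hpd⟩, hp, _, _⟩
      exact ⟨⟨hdr, hr0'⟩, hp, hpd, fun h => hr0' (by simpa [h] using hdr)⟩
  -- Step 3: evaluate the inner sum for each prime p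
  have h3 : ∀ p ∈ r.primeFactors,
      ∑ d ∈ r.divisors.filter (p ∣ ·), ((moebius d : ℝ) / d) * Real.log p
      = -(Real.log p * (Nat.totient r : ℝ) / (((p : ℝ) - 1) * r)) := by
    intro p hp
    obtain ⟨hp', hpr, -⟩ := Nat.mem_primeFactors.mp hp
    obtain ⟨m, hm⟩ := hpr
    have hm0 : 0 < m := Nat.pos_of_ne_zero fun h => by simp [h, hm] at hr
    have hpm : ¬ p ∣ m := fun hdvd => hp'.not_isUnit (hsq p (hm ▸ mul_dvd_mul_left p hdvd))
    have hcop : Nat.Coprime p m := (Nat.Prime.coprime_iff_not_dvd hp').mpr hpm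
    have hmsq : Squarefree m := hsq.squarefree_of_dvd ⟨p, by rw [hm, mul_comm]⟩
    have hp0 : (p : ℝ) ≠ 0 := Nat.cast_ne_zero.mpr hp'.pos.ne'
    have hm0' : (m : ℝ) ≠ 0 := Nat.cast_ne_zero.mpr hm0.ne'
    have hp1 : (1 : ℝ) < p := by exact_mod_cast hp'.one_lt
    have hp1' : (p : ℝ) - 1 ≠ 0 := sub_ne_zero.mpr hp1.ne'
    have hbij : ∑ d ∈ r.divisors.filter (p ∣ ·), ((moebius d : ℝ) / d) * Real.log p
        = ∑ e ∈ m.divisors, ((moebius (p * e) : ℝ) / (p * e)) * Real.log p := by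
      refine Finset.sum_nbij' (fun d => d / p) (fun e => p * e) ?_ ?_ ?_ ?_ ?_
      · intro d hd
        rw [Finset.mem_filter, Nat.mem_divisors] at hd
        obtain ⟨⟨hdr, hr0'⟩, hpd⟩ := hd
        obtain ⟨e, rfl⟩ := hpd
        show p * e / p ∈ m.divisors
        rw [Nat.mul_div_cancel_left _ hp'.pos, Nat.mem_divisors]
        rw [hm] at hdr
        exact ⟨(mul_dvd_mul_iff_left hp'.pos.ne').mp hdr, hm0.ne'⟩
      · intro e he
        rw [Nat.mem_divisors] at he
        rw [Finset.mem_filter, Nat.mem_divisors]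
        exact ⟨⟨hm ▸ mul_dvd_mul_left p he.1, hr.ne'⟩, dvd_mul_right p e⟩
      · intro d hd
        rw [Finset.mem_filter] at hd
        show p * (d / p) = d
        exact Nat.mul_div_cancel' hd.2
      · intro e he
        show p * e / p = e
        rw [Nat.mul_div_cancel_left _ hp'.pos]
      · intro d hd
        rw [Finset.mem_filter] at hd
        have hdp : p * (d / p) = d := Nat.mul_div_cancel' hd.2
        show _ = ((moebius (p * (d / p)) : ℤ) : ℝ) / ((p : ℝ) * ((d / p : ℕ) : ℝ)) * Real.log p
        rw [← Nat.cast_mul, hdp]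
    rw [hbij]
    have hsum : ∀ e ∈ m.divisors, ((moebius (p * e) : ℝ) / (p * e)) * Real.log p
        = (-Real.log p / p) * ((moebius e : ℝ) / e) := by
      intro e he
      have hce : Nat.Coprime p e := Nat.Coprime.coprime_dvd_right
        (Nat.dvd_of_mem_divisors he) hcop
      have he0 : (e : ℝ) ≠ 0 := Nat.cast_ne_zero.mpr (Nat.pos_of_mem_divisors he).ne'
      rw [isMultiplicative_moebius.map_mul_of_coprime hce, moebius_apply_prime hp']
      push_cast
      field_simp
    rw [Finset.sum_congr rfl hsum, ← Finset.mul_sum, sum_moebius_div_eq m hm0 hmsq]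
    have htot : (Nat.totient r : ℝ) = ((p : ℝ) - 1) * Nat.totient m := by
      have hnat : Nat.totient r = (p - 1) * Nat.totient m := by
        rw [hm, Nat.totient_mul hcop, Nat.totient_prime hp']
      rw [hnat]
      push_cast [Nat.cast_sub hp'.one_lt.le]
      ring
    rw [htot, hm]
    push_cast
    field_simp
      -- Final assembly
  rw [h1, h2, Finset.sum_congr rfl h3, Finset.mul_sum, Finset.mul_sum]
  refine Finset.sum_congr rfl fun p hp => ?_
  have hp' := Nat.prime_of_mem_primeFactors hp
  have hp1 : (1 : ℝ) < p := by exact_mod_cast hp'.one_lt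
  have hp1' : (p : ℝ) - 1 ≠ 0 := sub_ne_zero.mpr hp1.ne'
  field_simp
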